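/- Let A be an algebra and V an object in a strict monoidal category, and let ψ : V ⊗ A → A ⊗ V be a morphism satisfying the twisted multiplicativity condition (μ_A ⊗ V) ∘ (A ⊗ ψ) ∘ (ψ ⊗ A) = ψ ∘ (V ⊗ μ_A). Then the morphism ∇ = (μ_A ⊗ V) ∘ (A ⊗ ψ) ∘ (A ⊗ V ⊗ η_A) : A ⊗ V → A ⊗ V is idempotent, i.e. ∇ ∘ ∇ = ∇. -/
import Mathlib


open TensorProduct

variable {R A V : Type*} [CommRing R] [Ring A] [Algebra R A]
  [AddCommGroup V] [Module R V]

/-- (μ_A ⊗ V) ∘ (A ⊗ ψ) ∘ (ψ ⊗ A) : (V ⊗ A) ⊗ A → A ⊗ V -/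
noncomputable def psiMulLHS (ψ : V ⊗[R] A →ₗ[R] A ⊗[R] V) :
    (V ⊗[R] A) ⊗[R] A →ₗ[R] A ⊗[R] V :=
  TensorProduct.map (LinearMap.mul' R A) LinearMap.id
    ∘ₗ (TensorProduct.assoc R A A V).symm.toLinearMap
    ∘ₗ LinearMap.lTensor A ψ
    ∘ₗ (TensorProduct.assoc R A V A).toLinearMap
    ∘ₗ LinearMap.rTensor A ψ

/-- ψ ∘ (V ⊗ μ_A) : (V ⊗ A) ⊗ A → A ⊗ V -/
noncomputable def psiMulRHS (ψ : V ⊗[R] A →ₗ[R] A ⊗[R] V) :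
    (V ⊗[R] A) ⊗[R] A →ₗ[R] A ⊗[R] V :=
  ψ ∘ₗ LinearMap.lTensor V (LinearMap.mul' R A)
    ∘ₗ (TensorProduct.assoc R V A A).toLinearMap

/-- ∇ = (μ_A ⊗ V) ∘ (A ⊗ ψ) ∘ (A ⊗ V ⊗ η_A) : A ⊗ V → A ⊗ V -/
noncomputable def nabla (ψ : V ⊗[R] A →ₗ[R] A ⊗[R] V) :
    A ⊗[R] V →ₗ[R] A ⊗[R] V :=
  TensorProduct.map (LinearMap.mul' R A) LinearMap.id
    ∘ₗ (TensorProduct.assoc R A A V).symm.toLinearMap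
    ∘ₗ LinearMap.lTensor A ψ
    ∘ₗ LinearMap.lTensor A ((TensorProduct.mk R V A).flip 1)

lemma aux1 (a : A) (x : A ⊗[R] V) :
    TensorProduct.map (LinearMap.mul' R A) LinearMap.id
      ((TensorProduct.assoc R A A V).symm (a ⊗ₜ x))
      = TensorProduct.map (LinearMap.mulLeft R a) LinearMap.id x := by
  induction x using TensorProduct.induction_on with
  | zero => simp
  | tmul b w => simp [LinearMap.mul'_apply]
  | add x y hx hy => simp only [tmul_add, map_add, hx, hy]

lemma nabla_tmul (ψ : V ⊗[R] A →ₗ[R] A ⊗[R] V) (a : A) (v : V) :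
    nabla ψ (a ⊗ₜ v)
      = TensorProduct.map (LinearMap.mulLeft R a) LinearMap.id (ψ (v ⊗ₜ 1)) := by
  simp only [nabla, LinearMap.coe_comp, Function.comp_apply,
    LinearMap.lTensor_tmul, LinearEquiv.coe_coe, TensorProduct.mk_apply,
    LinearMap.flip_apply]
  exact aux1 a (ψ (v ⊗ₜ 1))

lemma mulLeft_map (a b : A) :
    TensorProduct.map (LinearMap.mulLeft R (a * b)) (LinearMap.id (M := V))
      = TensorProduct.map (LinearMap.mulLeft R a) LinearMap.id
          ∘ₗ TensorProduct.map (LinearMap.mulLeft R b) LinearMap.id := by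
  rw [← TensorProduct.map_comp]
  congr 1
  ext c; simp [mul_assoc]

lemma nabla_mulLeft (ψ : V ⊗[R] A →ₗ[R] A ⊗[R] V) (a : A) (x : A ⊗[R] V) :
    nabla ψ (TensorProduct.map (LinearMap.mulLeft R a) LinearMap.id x)
      = TensorProduct.map (LinearMap.mulLeft R a) LinearMap.id (nabla ψ x) := by
  induction x using TensorProduct.induction_on with
  | zero => simp
  | tmul b w =>
      simp only [TensorProduct.map_tmul, LinearMap.mulLeft_apply,
        LinearMap.id_coe, id_eq, nabla_tmul, mulLeft_map,
        LinearMap.comp_apply]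
  | add x y hx hy => simp only [map_add, hx, hy]

lemma nabla_psi (ψ : V ⊗[R] A →ₗ[R] A ⊗[R] V)
    (hψ : psiMulLHS ψ = psiMulRHS ψ) (v : V) :
    nabla ψ (ψ (v ⊗ₜ 1)) = ψ (v ⊗ₜ 1) := by
  have key : psiMulLHS ψ ((v ⊗ₜ (1:A)) ⊗ₜ (1:A)) = nabla ψ (ψ (v ⊗ₜ 1)) := by
    simp only [psiMulLHS, LinearMap.coe_comp, Function.comp_apply,
      LinearMap.rTensor_tmul, LinearEquiv.coe_coe]
    generalize ψ (v ⊗ₜ (1:A)) = y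
    induction y using TensorProduct.induction_on with
    | zero => simp
    | tmul b w =>
        simp only [TensorProduct.assoc_tmul, LinearMap.lTensor_tmul,
          nabla_tmul]
        exact aux1 b (ψ (w ⊗ₜ 1))
    | add x y hx hy =>
        simp only [add_tmul, map_add, hx, hy]
  rw [← key, hψ]
  simp [psiMulRHS, LinearMap.mul'_apply]

theorem nabla_idempotent (ψ : V ⊗[R] A →ₗ[R] A ⊗[R] V)
    (hψ : psiMulLHS ψ = psiMulRHS ψ) :
    nabla ψ ∘ₗ nabla ψ = nabla ψ := by
  apply TensorProduct.ext'
  intro a v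
  simp only [LinearMap.comp_apply, nabla_tmul, nabla_mulLeft, nabla_psi ψ hψ]
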